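/- Let n > 2 be an integer and C > 1 a constant, and for each σ ∈ [0,1] let y_σ : [0,∞) → ℝ be a C¹ function solving on (0,∞) the ordinary differential equation (2/(n(1−y²))) · (y/r) · ( y'/(1−y²) + ((n−2)/2)(y/r) ) = (C − σ/√(1−y²))², with y_σ(0) = 0, 0 ≤ y_σ(r) < √(1 − σ²/C²), y_σ' > 0 on [0,∞), and y_σ'(0) = C − σ. Then: (i) if σ, σ' ∈ [0,1] with σ < σ', then y_σ(r) > y_{σ'}(r) for all r ∈ (0,∞); (ii) for every R > 0 there exists a constant c₀ = c₀(n, C, R) > 0 such that for all σ ∈ (0,1], 0 ≤ y_σ(R) ≤ √(1 − σ²/(C − c₀)²). -/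

import Mathlib

open Set Filter

private lemma deriv_nonpos_of_pos_left {g : ℝ → ℝ} {t d : ℝ} (ht : 0 < t)
    (hd : HasDerivAt g d t) (h0 : g t = 0) (hpos : ∀ r ∈ Ioo (0:ℝ) t, 0 < g r) :
    d ≤ 0 := by
  have h1 : Tendsto (slope g t) (nhdsWithin t (Iio t)) (nhds d) :=
    (hasDerivAt_iff_tendsto_slope.1 hd).mono_left
      (nhdsWithin_mono _ fun r hr => ne_of_lt hr)
  refine le_of_tendsto h1 ?_
  filter_upwards [Ioo_mem_nhdsLT_of_mem (⟨ht, le_rfl⟩ : t ∈ Ioc 0 t)] with r hr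
  rw [slope_def_field, h0, sub_zero]
  exact div_nonpos_of_nonneg_of_nonpos (hpos r hr).le (by linarith [hr.2])

set_option maxHeartbeats 1000000 in
/-- monotonicity in `σ` of the family `y_σ` of radial soliton solutions and
the uniform estimate `0 ≤ y_σ(R) ≤ √(1 − σ²/(C−c₀)²)` for a constant `c₀ = c₀(n,C,R) > 0`. -/
theorem stmt_11 (n : ℕ) (hn : 2 < n) (C : ℝ) (hC : 1 < C) (y : ℝ → ℝ → ℝ)
    (hy : ∀ σ ∈ Icc (0 : ℝ) 1,
      ContDiffOn ℝ 1 (y σ) (Ici 0) ∧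
      y σ 0 = 0 ∧
      (∀ r > (0 : ℝ),
        2 / ((n : ℝ) * (1 - y σ r ^ 2)) * (y σ r / r) *
            (deriv (y σ) r / (1 - y σ r ^ 2) + ((n : ℝ) - 2) / 2 * (y σ r / r)) =
          (C - σ / Real.sqrt (1 - y σ r ^ 2)) ^ 2) ∧
      (∀ r ≥ (0 : ℝ), 0 ≤ y σ r ∧ y σ r < Real.sqrt (1 - σ ^ 2 / C ^ 2)) ∧
      (∀ r ≥ (0 : ℝ), 0 < derivWithin (y σ) (Ici 0) r) ∧
      derivWithin (y σ) (Ici 0) 0 = C - σ) :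
    (∀ σ ∈ Icc (0 : ℝ) 1, ∀ σ' ∈ Icc (0 : ℝ) 1, σ < σ' →
      ∀ r > (0 : ℝ), y σ' r < y σ r) ∧
    (∀ R > (0 : ℝ), ∃ c₀ : ℝ, 0 < c₀ ∧
      ∀ σ ∈ Ioc (0 : ℝ) 1,
        0 ≤ y σ R ∧ y σ R ≤ Real.sqrt (1 - σ ^ 2 / (C - c₀) ^ 2)) := by
  have hC0 : (0:ℝ) < C := lt_trans one_pos hC
  have hn3 : (3:ℝ) ≤ (n:ℝ) := by exact_mod_cast hn
  -- strict monotonicity of each y σ on [0, ∞)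
  have hmono : ∀ σ ∈ Icc (0:ℝ) 1, StrictMonoOn (y σ) (Ici 0) := by
    intro σ hσ
    obtain ⟨hcd, _, _, _, hpos, _⟩ := hy σ hσ
    apply strictMonoOn_of_deriv_pos (convex_Ici 0) hcd.continuousOn
    intro x hx
    rw [interior_Ici] at hx
    have h := hpos x (le_of_lt hx)
    rwa [derivWithin_of_mem_nhds (Ici_mem_nhds hx)] at h
  -- positivity of y σ r for r > 0
  have hYpos : ∀ σ ∈ Icc (0:ℝ) 1, ∀ r > (0:ℝ), 0 < y σ r := by
    intro σ hσ r hr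
    obtain ⟨_, h0, _, _, _, _⟩ := hy σ hσ
    have := hmono σ hσ self_mem_Ici (le_of_lt hr : (0:ℝ) ≤ r) hr
    rwa [h0] at this
  -- the fundamental bound `y σ r ^ 2 < 1 - σ²/C²`
  have hY2 : ∀ σ ∈ Icc (0:ℝ) 1, ∀ r ≥ (0:ℝ), y σ r ^ 2 < 1 - σ^2 / C^2 := by
    intro σ hσ r hr
    obtain ⟨_, _, _, hbd, _, _⟩ := hy σ hσ
    obtain ⟨h1, h2⟩ := hbd r hr
    have hA : (0:ℝ) ≤ 1 - σ^2 / C^2 := by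
      have hσ1 : σ ^ 2 ≤ 1 := by nlinarith [hσ.1, hσ.2]
      have : σ^2 / C^2 ≤ 1 := by
        rw [div_le_one (by positivity)]; nlinarith
      linarith
    nlinarith [Real.sq_sqrt hA, Real.sqrt_nonneg (1 - σ^2/C^2)]
  have h1Y : ∀ σ ∈ Icc (0:ℝ) 1, ∀ r ≥ (0:ℝ), 0 < 1 - y σ r ^ 2 := by
    intro σ hσ r hr
    have := hY2 σ hσ r hr
    have h2 : 0 ≤ σ^2/C^2 := by positivity
    linarith
  -- σ / √(1 - y σ r ^2) < C
  have hqC : ∀ σ ∈ Icc (0:ℝ) 1, ∀ r ≥ (0:ℝ),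
      σ / Real.sqrt (1 - y σ r ^ 2) < C := by
    intro σ hσ r hr
    have h1 := h1Y σ hσ r hr
    have h2 := hY2 σ hσ r hr
    have hspos : 0 < Real.sqrt (1 - y σ r ^ 2) := Real.sqrt_pos.2 h1
    have hs2 : Real.sqrt (1 - y σ r ^ 2) ^ 2 = 1 - y σ r ^ 2 := Real.sq_sqrt h1.le
    rw [div_lt_iff₀ hspos]
    have hσ2 : σ^2 < C^2 * Real.sqrt (1 - y σ r ^ 2) ^ 2 := by
      have hd : σ^2 / C^2 < Real.sqrt (1 - y σ r ^ 2) ^ 2 := by rw [hs2]; linarith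
      rw [div_lt_iff₀ (by positivity : (0:ℝ) < C^2)] at hd
      linarith [hd]
    nlinarith [hσ2, hσ.1, mul_pos hC0 hspos]
  -- Part (i): monotonicity in σ
  have part1 : ∀ σ ∈ Icc (0:ℝ) 1, ∀ σ' ∈ Icc (0:ℝ) 1, σ < σ' →
      ∀ r > (0:ℝ), y σ' r < y σ r := by
    intro σ hσ σ' hσ' hlt
    obtain ⟨hcd, h0, hode, hbd, hpos, hd0⟩ := hy σ hσ
    obtain ⟨hcd', h0', hode', hbd', hpos', hd0'⟩ := hy σ' hσ'
    set g : ℝ → ℝ := fun r => y σ r - y σ' r with hg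
    -- g is positive in a right neighbourhood of 0
    have hder0 : HasDerivWithinAt g (σ' - σ) (Ici 0) 0 := by
      have A := (hcd.differentiableOn one_ne_zero 0 self_mem_Ici).hasDerivWithinAt
      have B := (hcd'.differentiableOn one_ne_zero 0 self_mem_Ici).hasDerivWithinAt
      rw [hd0] at A; rw [hd0'] at B
      have hAB := A.sub B
      rw [show σ' - σ = C - σ - (C - σ') by ring]; exact hAB
    have hslope : Tendsto (slope g 0) (nhdsWithin 0 (Ioi 0)) (nhds (σ' - σ)) := by
      have h := hasDerivWithinAt_iff_tendsto_slope.1 hder0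
      rwa [Ici_sdiff_left] at h
    have hev : ∀ᶠ r in nhdsWithin (0:ℝ) (Ioi 0), 0 < g r := by
      have hev1 : ∀ᶠ r in nhdsWithin (0:ℝ) (Ioi 0), 0 < slope g 0 r :=
        hslope.eventually (eventually_gt_nhds (by linarith))
      filter_upwards [hev1, self_mem_nhdsWithin] with r h1 h2
      rw [slope_def_field] at h1
      have hg0 : g 0 = 0 := by simp [hg, h0, h0']
      rw [hg0, sub_zero, sub_zero] at h1
      have hr : (0:ℝ) < r := h2
      exact (div_pos_iff.1 h1).elim (fun h => h.1) (fun h => absurd h.2 (by linarith))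
    obtain ⟨δ, hδmem, hδ2⟩ := mem_nhdsGT_iff_exists_Ioo_subset.1 hev
    have hδpos : (0:ℝ) < δ := hδmem
    by_contra hcon
    push_neg at hcon
    obtain ⟨r₀, hr₀, hgr₀⟩ := hcon
    set S : Set ℝ := {r : ℝ | 0 < r ∧ g r ≤ 0} with hS
    have hSne : S.Nonempty := ⟨r₀, hr₀, by simp only [hg]; linarith⟩
    have hSbd : BddBelow S := ⟨0, fun r hr => hr.1.le⟩
    set t := sInf S with htdef
    have hδt : ∀ r ∈ S, δ ≤ r := by
      intro r hr
      by_contra h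
      push_neg at h
      have hgr : 0 < g r := hδ2 ⟨hr.1, h⟩
      exact absurd hr.2 (not_le.2 hgr)
    have ht : δ ≤ t := le_csInf hSne hδt
    have htpos : 0 < t := lt_of_lt_of_le hδpos ht
    have hgpos : ∀ r ∈ Ioo (0:ℝ) t, 0 < g r := by
      intro r hr
      by_contra h
      push_neg at h
      have hrS : r ∈ S := ⟨hr.1, h⟩
      have := csInf_le hSbd hrS
      linarith [hr.2]
    have hct : ContinuousAt g t := by
      have c1 : ContinuousAt (y σ) t := hcd.continuousOn.continuousAt (Ici_mem_nhds htpos)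
      have c2 : ContinuousAt (y σ') t := hcd'.continuousOn.continuousAt (Ici_mem_nhds htpos)
      exact c1.sub c2
    have hgt_le : g t ≤ 0 := by
      have hclos : t ∈ closure S := csInf_mem_closure hSne hSbd
      haveI : (nhdsWithin t S).NeBot := mem_closure_iff_nhdsWithin_neBot.1 hclos
      refine le_of_tendsto (hct.continuousWithinAt : ContinuousWithinAt g S t) ?_
      filter_upwards [self_mem_nhdsWithin] with r hr
      exact hr.2
    have hgt_ge : 0 ≤ g t := by
      haveI : (nhdsWithin t (Iio t)).NeBot := inferInstance
      refine ge_of_tendsto (hct.continuousWithinAt : ContinuousWithinAt g (Iio t) t) ?_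
      filter_upwards [Ioo_mem_nhdsLT_of_mem (⟨htpos, le_rfl⟩ : t ∈ Ioc 0 t)] with r hr
      exact (hgpos r hr).le
    have hgt : g t = 0 := le_antisymm hgt_le hgt_ge
    -- derivatives at t
    have hdiffσ : DifferentiableAt ℝ (y σ) t :=
      (hcd.differentiableOn one_ne_zero).differentiableAt (Ici_mem_nhds htpos)
    have hdiffσ' : DifferentiableAt ℝ (y σ') t :=
      (hcd'.differentiableOn one_ne_zero).differentiableAt (Ici_mem_nhds htpos)
    have hderg : HasDerivAt g (deriv (y σ) t - deriv (y σ') t) t :=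
      (hdiffσ.hasDerivAt).sub (hdiffσ'.hasDerivAt)
    -- algebra : deriv (y σ) t > deriv (y σ') t
    have h1 := hode t htpos
    have h2 := hode' t htpos
    have hgt' : y σ t - y σ' t = 0 := hgt
    have hEq : y σ' t = y σ t := by linarith
    rw [hEq] at h2
    have h1Yt := h1Y σ hσ t htpos.le
    have hYp := hYpos σ hσ t htpos
    have hq'C := hqC σ' hσ' t htpos.le
    rw [hEq] at hq'C
    obtain ⟨Y, hYdef⟩ : ∃ Y, y σ t = Y := ⟨_, rfl⟩
    rw [hYdef] at h1 h2 h1Yt hYp hq'C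
    obtain ⟨D, hDdef⟩ : ∃ D, deriv (y σ) t = D := ⟨_, rfl⟩
    obtain ⟨D', hD'def⟩ : ∃ D', deriv (y σ') t = D' := ⟨_, rfl⟩
    rw [hDdef] at h1
    rw [hD'def] at h2
    obtain ⟨s, hsdef⟩ : ∃ s, Real.sqrt (1 - Y ^ 2) = s := ⟨_, rfl⟩
    rw [hsdef] at h1 h2 hq'C
    have hspos : 0 < s := by rw [← hsdef]; exact Real.sqrt_pos.2 h1Yt
    have hs2 : s ^ 2 = 1 - Y ^ 2 := by rw [← hsdef]; exact Real.sq_sqrt h1Yt.le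
    have hqq : σ / s < σ' / s := by
      apply div_lt_div_of_pos_right hlt hspos
    have hkey : (2 / ((n:ℝ) * (1 - Y^2)) * (Y / t) * (1 / (1 - Y^2))) *
        (D - D') = (C - σ / s) ^ 2 - (C - σ' / s) ^ 2 := by
      linear_combination h1 - h2
    have hc : 0 < 2 / ((n:ℝ) * (1 - Y^2)) * (Y / t) * (1 / (1 - Y^2)) := by
      have hn0 : (0:ℝ) < (n:ℝ) := by linarith
      exact mul_pos (mul_pos (div_pos two_pos (mul_pos hn0 h1Yt)) (div_pos hYp htpos))
        (div_pos one_pos h1Yt)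
    have hRpos : 0 < (C - σ / s) ^ 2 - (C - σ' / s) ^ 2 := by
      have h3 : 0 ≤ C - σ' / s := by linarith
      nlinarith [hqq]
    have hDD : 0 < D - D' := by nlinarith [hkey, hc, hRpos]
    rw [hDdef, hD'def] at hderg
    have := deriv_nonpos_of_pos_left htpos hderg hgt hgpos
    linarith
  refine ⟨part1, ?_⟩
  -- Part (ii)
  intro R hR
  have h1mem : (1:ℝ) ∈ Icc (0:ℝ) 1 := ⟨zero_le_one, le_rfl⟩
  have hY1R : 0 < y 1 R := hYpos 1 h1mem R hR
  set k := Real.sqrt (((n:ℝ) - 2) / n) / R with hkdef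
  have hnn : (0:ℝ) < ((n:ℝ) - 2) / n := div_pos (by linarith) (by linarith)
  have hk : 0 < k := div_pos (Real.sqrt_pos.2 hnn) hR
  refine ⟨k * y 1 R, mul_pos hk hY1R, ?_⟩
  intro σ hσ
  have hσI : σ ∈ Icc (0:ℝ) 1 := ⟨hσ.1.le, hσ.2⟩
  obtain ⟨hcd, h0, hode, hbd, hpos, hd0⟩ := hy σ hσI
  have hY0 : (0:ℝ) ≤ y σ R := (hbd R hR.le).1
  refine ⟨hY0, ?_⟩
  have hDpos : 0 < deriv (y σ) R := by
    have h := hpos R hR.le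
    rwa [derivWithin_of_mem_nhds (Ici_mem_nhds hR)] at h
  have hode1 := hode R hR
  have h1YR := h1Y σ hσI R hR.le
  have hq := hqC σ hσI R hR.le
  -- lower bound on y σ R via monotonicity in σ
  have hyY : y 1 R ≤ y σ R := by
    rcases eq_or_lt_of_le hσ.2 with h | h
    · rw [h]
    · exact (part1 σ hσI 1 h1mem h R hR).le
  -- make things opaque
  obtain ⟨Y, hYdef⟩ : ∃ Y, y σ R = Y := ⟨_, rfl⟩
  rw [hYdef] at hode1 hY0 h1YR hq hyY ⊢
  obtain ⟨D, hDdef⟩ : ∃ D, deriv (y σ) R = D := ⟨_, rfl⟩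
  rw [hDdef] at hode1 hDpos
  obtain ⟨s, hsdef⟩ : ∃ s, Real.sqrt (1 - Y ^ 2) = s := ⟨_, rfl⟩
  rw [hsdef] at hode1 hq
  have hs2 : s ^ 2 = 1 - Y ^ 2 := by rw [← hsdef]; exact Real.sq_sqrt h1YR.le
  have hspos : 0 < s := by rw [← hsdef]; exact Real.sqrt_pos.2 h1YR
  -- key inequality from the ODE: ((n-2)/n) (Y/R)^2 ≤ (C - σ/s)^2
  have hn0 : (0:ℝ) < (n:ℝ) := by linarith
  have hkey : ((n:ℝ) - 2) / n * (Y / R) ^ 2 ≤ (C - σ / s) ^ 2 := by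
    rw [← hode1]
    have hsplit : 2 / ((n:ℝ) * (1 - Y^2)) * (Y / R) *
        (D / (1 - Y^2) + ((n:ℝ) - 2) / 2 * (Y / R)) =
        2 / ((n:ℝ) * (1 - Y^2)) * (Y / R) * (D / (1 - Y^2)) +
        2 / ((n:ℝ) * (1 - Y^2)) * (Y / R) * (((n:ℝ) - 2) / 2 * (Y / R)) := by ring
    rw [hsplit]
    have e1 : 0 ≤ 2 / ((n:ℝ) * (1 - Y^2)) * (Y / R) * (D / (1 - Y^2)) := by
      apply mul_nonneg (mul_nonneg _ _) _
      · exact div_nonneg (by norm_num) (mul_pos hn0 h1YR).le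
      · exact div_nonneg hY0 hR.le
      · exact div_nonneg hDpos.le h1YR.le
    have e2 : ((n:ℝ) - 2) / n * (Y / R) ^ 2 ≤
        2 / ((n:ℝ) * (1 - Y^2)) * (Y / R) * (((n:ℝ) - 2) / 2 * (Y / R)) := by
      have heq : 2 / ((n:ℝ) * (1 - Y^2)) * (Y / R) * (((n:ℝ) - 2) / 2 * (Y / R)) =
          ((n:ℝ) - 2) / n * (Y / R) ^ 2 / (1 - Y^2) := by
        field_simp
      rw [heq, le_div_iff₀ h1YR]
      have h1 : (1 - Y^2) ≤ 1 := by nlinarith [sq_nonneg Y]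
      have h2 : 0 ≤ ((n:ℝ) - 2) / n * (Y / R) ^ 2 := by positivity
      nlinarith
    linarith
  have hk2 : k ^ 2 = ((n:ℝ) - 2) / n / R ^ 2 := by
    rw [hkdef, div_pow, Real.sq_sqrt hnn.le]
  have hCq : 0 < C - σ / s := by linarith
  have hkey2 : (k * Y) ^ 2 ≤ (C - σ / s) ^ 2 := by
    have heq : (k * Y) ^ 2 = ((n:ℝ) - 2) / n * (Y / R) ^ 2 := by
      rw [mul_pow, hk2]
      field_simp
    rw [heq]
    exact hkey
  have hkY : k * Y ≤ C - σ / s := by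
    nlinarith [hkey2, hCq, mul_nonneg hk.le hY0]
  have hc₀Y : k * y 1 R ≤ k * Y := mul_le_mul_of_nonneg_left hyY hk.le
  have hσs : 0 < σ / s := div_pos hσ.1 hspos
  have hCkY : 0 < C - k * Y := by linarith
  have hCc : 0 < C - k * y 1 R := by linarith
  have h' : σ / s ≤ C - k * Y := by linarith
  have hσle : σ ≤ (C - k * Y) * s := (div_le_iff₀ hspos).1 h'
  have hfin1 : σ ^ 2 / (C - k * Y) ^ 2 ≤ 1 - Y ^ 2 := by
    rw [div_le_iff₀ (by positivity)]
    nlinarith [hσle, hσ.1, hs2, mul_pos hCkY hspos]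
  have hfin2 : σ ^ 2 / (C - k * y 1 R) ^ 2 ≤ σ ^ 2 / (C - k * Y) ^ 2 := by
    apply div_le_div_of_nonneg_left (by positivity) (by positivity)
    nlinarith [hCkY, hc₀Y]
  have hfinal : Y ^ 2 ≤ 1 - σ ^ 2 / (C - k * y 1 R) ^ 2 := by linarith
  exact (Real.le_sqrt hY0 (le_trans (sq_nonneg Y) hfinal)).2 hfinal
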